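/- arXiv:2308.01325 — 3 statements merged into one kernel-verified Lean document; each statement's English description precedes it below -/
import Mathlib

section
/- Let G be a torsion-free abelian group, and let q ≥ r > s ≥ 1 be integers. Suppose (α_1,...,α_q) is a q-tuple of elements of G with the property (P_{r,s}): for any r chosen elements α_{l(1)},...,α_{l(r)} (with 1 ≤ l(1) < ... < l(r) ≤ q) and any s distinct indices i_1,...,i_s ∈ {1,...,r}, there exist distinct indices j_1,...,j_s ∈ {1,...,r} with {j_1,...,j_s} ≠ {i_1,...,i_s} such that α_{l(i_1)}·...·α_{l(i_s)} = α_{l(j_1)}·...·α_{l(j_s)}. Then there exist q−r+2 distinct indices i_1,...,i_{q−r+2} ∈ {1,...,q} with α_{i_1} = α_{i_2} = ... = α_{i_{q−r+2}}. -/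
/-- Fujimoto's property `(P_{r,s})` for a `q`-tuple `α` of elements of an abelian group:
for any choice of `r` of the elements (given by an embedding `l : Fin r ↪ Fin q`) and any
set `I` of `s` distinct indices among `{1,...,r}`, there is a different set `J` of `s`
distinct indices with the same product. -/
def HasPropP {G : Type*} [CommGroup G] {q : ℕ} (α : Fin q → G) (r s : ℕ) : Prop :=
  ∀ l : Fin r ↪ Fin q, ∀ I : Finset (Fin r), I.card = s →
    ∃ J : Finset (Fin r), J.card = s ∧ J ≠ I ∧ ∏ x ∈ I, α (l x) = ∏ x ∈ J, α (l x)

/-- The December 2024 Mathlib definition: no non-identity element has finite order. -/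
def Monoid.IsTorsionFree (G : Type*) [Monoid G] : Prop :=
  ∀ g : G, g ≠ 1 → ¬IsOfFinOrder g

/-- The combinatorial core, in a linearly ordered abelian group. -/
theorem fujimoto_aux_linear {G : Type*} [CommGroup G] [LinearOrder G] [IsOrderedMonoid G] {q r s : ℕ}
    (hs : 1 ≤ s) (hsr : s < r) (hrq : r ≤ q) (α : Fin q → G) (hα : HasPropP α r s) :
    ∃ T : Finset (Fin q), T.card = q - r + 2 ∧ ∀ i ∈ T, ∀ j ∈ T, α i = α j := by
  classical
  set σ := Tuple.sort α with hσ
  set a : Fin q → G := fun i => α (σ i) with ha_def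
  have ha : Monotone a := Tuple.monotone_sort α
  have hq0 : 0 < q := lt_of_lt_of_le (lt_of_le_of_lt (Nat.zero_le s) hsr) hrq
  -- the selection of `r` positions
  set pf : Fin r → Fin q := fun t =>
    ⟨if t.val < r - s then t.val else t.val + (q - r), by
      have := t.isLt; split <;> omega⟩ with hpf
  have hpmono : StrictMono pf := by
    intro t1 t2 h
    have h1 := t1.isLt; have h2 := t2.isLt
    have h12 : t1.val < t2.val := h
    simp only [hpf, Fin.lt_def]
    split <;> split <;> omega
  set l : Fin r ↪ Fin q := ⟨fun t => σ (pf t), σ.injective.comp hpmono.injective⟩ with hl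
  set I : Finset (Fin r) := Finset.Ici (⟨r - s, by omega⟩ : Fin r) with hI
  have hIcard : I.card = s := by
    rw [hI, Fin.card_Ici]
    show r - (r - s) = s
    omega
  have hImem : ∀ x : Fin r, x ∈ I ↔ r - s ≤ x.val := by
    intro x; rw [hI, Finset.mem_Ici, Fin.le_def]
  obtain ⟨J, hJc, hJne, hprod⟩ := hα l I hIcard
  set f : Fin r → G := fun x => a (pf x) with hf
  have hprod' : ∏ x ∈ I, f x = ∏ x ∈ J, f x := hprod
  set v : G := a ⟨q - s, by omega⟩ with hv
  have hfI : ∀ x ∈ I, v ≤ f x := by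
    intro x hx
    have hx' : r - s ≤ x.val := (hImem x).1 hx
    apply ha
    simp only [hpf, Fin.le_def]
    rw [if_neg (by omega)]
    omega
  have hfnI : ∀ x : Fin r, x ∉ I → f x ≤ v := by
    intro x hx
    have hx' : x.val < r - s := by
      have := (hImem x).not.1 hx; omega
    apply ha
    simp only [hpf, Fin.le_def]
    rw [if_pos hx']
    omega
  -- products over the symmetric differences agree
  have hsd : ∏ x ∈ I \ J, f x = ∏ x ∈ J \ I, f x := by
    have e1 : (∏ x ∈ I \ (I ∩ J), f x) * ∏ x ∈ I ∩ J, f x = ∏ x ∈ I, f x :=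
      Finset.prod_sdiff Finset.inter_subset_left
    have e2 : (∏ x ∈ J \ (J ∩ I), f x) * ∏ x ∈ J ∩ I, f x = ∏ x ∈ J, f x :=
      Finset.prod_sdiff Finset.inter_subset_left
    rw [Finset.sdiff_inter_self_left] at e1 e2
    rw [Finset.inter_comm] at e2
    have := e1.trans (hprod'.trans e2.symm)
    exact mul_right_cancel this
  have hk : (I \ J).card = (J \ I).card := Finset.card_sdiff_comm (hIcard.trans hJc.symm)
  have low : v ^ (J \ I).card ≤ ∏ x ∈ I \ J, f x := by
    rw [← hk]
    exact Finset.pow_card_le_prod _ _ _ fun x hx => hfI x (Finset.mem_sdiff.1 hx).1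
  have high : ∏ x ∈ J \ I, f x ≤ v ^ (J \ I).card :=
    Finset.prod_le_pow_card _ _ _ fun x hx => hfnI x (Finset.mem_sdiff.1 hx).2
  have heq : ∏ x ∈ J \ I, f x = ∏ x ∈ J \ I, v := by
    rw [Finset.prod_const]
    exact le_antisymm high (hsd ▸ low)
  have hall : ∀ x ∈ J \ I, f x = v :=
    (Finset.prod_eq_prod_iff_of_le fun x hx => hfnI x (Finset.mem_sdiff.1 hx).2).1 heq
  -- there is an element of `J` outside `I`
  have hex : ∃ x ∈ J, x ∉ I := by
    by_contra h
    push_neg at h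
    exact hJne (Finset.eq_of_subset_of_card_le h (hIcard ▸ hJc.ge))
  obtain ⟨x, hxJ, hxI⟩ := hex
  have hxv : f x = v := hall x (Finset.mem_sdiff.2 ⟨hxJ, hxI⟩)
  have hxval : x.val < r - s := by
    have := (hImem x).not.1 hxI; omega
  have hxq : x.val < q := lt_of_lt_of_le (lt_of_lt_of_le x.isLt hrq) le_rfl
  have hxa : a ⟨x.val, hxq⟩ = v := by
    rw [← hxv]
    simp only [hf, hpf]
    congr 1
    exact Fin.ext (by simp [if_pos hxval])
  -- everything between position `x` and position `q - s` equals `v`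
  have hrun : ∀ j : Fin q, x.val ≤ j.val → j.val ≤ q - s → a j = v := by
    intro j hj1 hj2
    refine le_antisymm (ha (by rw [Fin.le_def]; exact hj2)) ?_
    rw [← hxa]
    exact ha (by rw [Fin.le_def]; exact hj1)
  refine ⟨Finset.image σ (Finset.Icc (⟨r - s - 1, by omega⟩ : Fin q) ⟨q - s, by omega⟩),
    ?_, ?_⟩
  · rw [Finset.card_image_of_injective _ σ.injective, Fin.card_Icc]
    simp only
    omega
  · have hval : ∀ i ∈ Finset.image σ
        (Finset.Icc (⟨r - s - 1, by omega⟩ : Fin q) ⟨q - s, by omega⟩), α i = v := by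
      intro i hi
      obtain ⟨j, hj, rfl⟩ := Finset.mem_image.1 hi
      rw [Finset.mem_Icc, Fin.le_def, Fin.le_def] at hj
      have hj1 : r - s - 1 ≤ j.val := hj.1
      have hj2 : j.val ≤ q - s := hj.2
      exact hrun j (by omega) hj2
    intro i hi j hj
    rw [hval i hi, hval j hj]

/-- **Fujimoto's first combinatorial lemma.** If a `q`-tuple in a torsion-free abelian
group has property `(P_{r,s})` with `q ≥ r > s ≥ 1`, then some `q - r + 2` of its entries
are equal. -/
theorem fujimoto_first_combinatorial_lemma (G : Type*) [CommGroup G]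
    (hG : Monoid.IsTorsionFree G) (q r s : ℕ) (hs : 1 ≤ s) (hsr : s < r) (hrq : r ≤ q)
    (α : Fin q → G) (hα : HasPropP α r s) :
    ∃ T : Finset (Fin q), T.card = q - r + 2 ∧ ∀ i ∈ T, ∀ j ∈ T, α i = α j := by
  classical
  set S : Set G := Set.range α with hS
  have hSfin : S.Finite := Set.finite_range α
  haveI : Finite S := hSfin.to_subtype
  set H : Subgroup G := Subgroup.closure S with hH
  haveI : Group.FG H := Group.closure_finite_fg S
  haveI : AddGroup.FG (Additive H) := GroupFG.iff_add_fg.1 ‹_›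
  haveI : Module.Finite ℤ (Additive H) := Module.Finite.iff_addGroup_fg.2 ‹_›
  have htf : Monoid.IsTorsionFree H := fun g hg hfin => hG g (fun h => hg (Subtype.ext h)) (H.subtype.isOfFinOrder hfin)
  have htf' : ∀ g : Additive H, g ≠ 0 → ¬IsOfFinAddOrder g := by
    intro g hg hfin
    exact htf g.toMul (fun h => hg (by simpa using congrArg Additive.ofMul h))
      (isOfFinAddOrder_ofMul_iff.1 hfin)
  haveI : IsAddTorsionFree (Additive H) :=
    isAddTorsionFree_iff_not_isOfFinAddOrder.2 htf'
  haveI : Module.Free ℤ (Additive H) := Module.free_of_finite_type_torsion_free'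
  set ι := Module.Free.ChooseBasisIndex ℤ (Additive H) with hι
  letI : LinearOrder ι := LinearOrder.lift' (Fintype.equivFin ι) (Equiv.injective _)
  set b : Module.Basis ι ℤ (Additive H) := Module.Free.chooseBasis ℤ (Additive H) with hb
  -- the target linearly ordered group
  let L := Lex (ι →₀ ℤ)
  let G' := Multiplicative L
  -- the embedding of `H` into `G'`
  set ψ : H →* G' :=
    { toFun := fun h => Multiplicative.ofAdd (toLex (b.repr (Additive.ofMul h)))
      map_one' := by simp
      map_mul' := by
        intro x y
        simp only [ofMul_mul, map_add, toLex_add, ofAdd_add] } with hψ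
  have hψinj : Function.Injective ψ := by
    intro x y hxy
    have h1 : toLex (b.repr (Additive.ofMul x)) = toLex (b.repr (Additive.ofMul y)) :=
      Multiplicative.ofAdd.injective hxy
    have h2 : b.repr (Additive.ofMul x) = b.repr (Additive.ofMul y) := toLex.injective h1
    exact Additive.ofMul.injective (b.repr.injective h2)
  have hmem : ∀ i, α i ∈ H := fun i => Subgroup.subset_closure (Set.mem_range_self i)
  set β : Fin q → G' := fun i => ψ ⟨α i, hmem i⟩ with hβ
  have hβP : HasPropP β r s := by
    intro l I hI
    obtain ⟨J, hJc, hJne, hpr⟩ := hα l I hI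
    refine ⟨J, hJc, hJne, ?_⟩
    have key : ∀ K : Finset (Fin r),
        ∏ x ∈ K, β (l x) = ψ (∏ x ∈ K, (⟨α (l x), hmem (l x)⟩ : H)) := by
      intro K
      rw [map_prod]
    rw [key I, key J]
    congr 1
    apply Subtype.ext
    push_cast
    exact hpr
  obtain ⟨T, hTcard, hTeq⟩ := fujimoto_aux_linear hs hsr hrq β hβP
  refine ⟨T, hTcard, fun i hi j hj => ?_⟩
  have := hψinj (hTeq i hi j hj)
  exact congrArg Subtype.val this
end

section
/- Let f and g be meromorphic maps of C^m into P^n with reduced representations (f_0,...,f_n) and (g_0,...,g_n). Suppose g(C^m) is not contained in any hypersurface of degree ≤ n+1, that H_{n+2},...,H_{2n+2} are the coordinate hyperplanes {x_{i-n-2} = 0} (for i = n+2,...,2n+2), H_1,...,H_{n+1} are hyperplanes defined by linear forms a^i_0 X_0 + ... + a^i_n X_n making {H_j}_{j=1}^{2n+2} in general position, and that (f,H_i)/(g,H_i) = c_{i-1}·(f_{i-1}/g_{i-1}) holds for all 1 ≤ i ≤ n+1, where (f,H_i) = a^i_0 f_0 + ... + a^i_n f_n, (g,H_i) = a^i_0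 g_0 + ... + a^i_n g_n, and c_0,...,c_n are nonzero constants. Then c_0 = c_1 = ... = c_n = 1 and f = g. -/
open MvPolynomial

private lemma entire_zero_of_mul {m : ℕ} {f g : (Fin m → ℂ) → ℂ}
    (hf : Differentiable ℂ f) (hg : Differentiable ℂ g)
    (hfg : ∀ z, f z * g z = 0) {z₁ : Fin m → ℂ} (hz₁ : g z₁ ≠ 0) :
    ∀ w, f w = 0 := by
  intro w
  set γ : ℂ → (Fin m → ℂ) := fun t => z₁ + t • (w - z₁) with hγdef
  have hγ : Differentiable ℂ γ := (differentiable_id.smul_const (w - z₁)).const_add z₁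
  have hfγ : Differentiable ℂ (f ∘ γ) := hf.comp hγ
  have hgγ : Differentiable ℂ (g ∘ γ) := hg.comp hγ
  have h0 : γ 0 = z₁ := by simp [hγdef]
  have h1 : γ 1 = w := by simp [hγdef]
  have hge : (g ∘ γ) 0 ≠ 0 := by simpa [Function.comp, h0] using hz₁
  have hev : ∀ᶠ t in nhds (0 : ℂ), (g ∘ γ) t ≠ 0 :=
    (hgγ.continuous.continuousAt).eventually_ne hge
  have hev0 : (f ∘ γ) =ᶠ[nhds (0 : ℂ)] 0 := by
    filter_upwards [hev] with t ht
    have h := hfg (γ t)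
    exact (mul_eq_zero.1 h).resolve_right ht
  have han : AnalyticOnNhd ℂ (f ∘ γ) Set.univ :=
    hfγ.differentiableOn.analyticOnNhd isOpen_univ
  have heq := han.eqOn_zero_of_preconnected_of_eventuallyEq_zero isPreconnected_univ
      (Set.mem_univ (0 : ℂ)) hev0
  have := heq (Set.mem_univ (1 : ℂ))
  simpa [Function.comp, h1] using this

private lemma diff_eval {m N : ℕ} {G : (Fin m → ℂ) → Fin N → ℂ}
    (hG : ∀ i, Differentiable ℂ fun z => G z i) (p : MvPolynomial (Fin N) ℂ) :
    Differentiable ℂ fun z => eval (G z) p := by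
  induction p using MvPolynomial.induction_on with
  | C a => simpa only [eval_C] using differentiable_const a
  | add p q hp hq => simpa only [map_add] using hp.fun_add hq
  | mul_X p i hp => simpa only [map_mul, eval_X] using hp.fun_mul (hG i)

private lemma det_row_diag {N : ℕ} (k : Fin N) (d r : Fin N → ℂ) :
    (Matrix.of fun i j => if i = k then r j else if i = j then d i else 0).det
      = r k * ∏ i ∈ Finset.univ.erase k, d i := by
  classical
  have hzero : ∀ σ ∈ (Finset.univ : Finset (Equiv.Perm (Fin N))), σ ≠ 1 →
      (Equiv.Perm.sign σ) •
        (∏ i, (Matrix.of fun i j => if i = k then r j else if i = j then d i else 0) (σ i) i)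
        = 0 := by
    intro σ _ hσ
    have hex : ∃ i, σ i ≠ i ∧ σ i ≠ k := by
      by_contra hcon
      push_neg at hcon
      have hfix : ∀ i, σ i = i := by
        intro i
        by_contra hi
        have hik := hcon i hi
        have hkk : σ k ≠ k := fun h => hi (by rw [σ.injective (hik.trans h.symm)]; exact h)
        exact hkk (hcon k hkk)
      exact hσ (Equiv.ext hfix)
    obtain ⟨i, h1, h2⟩ := hex
    have hz : (Matrix.of fun i j => if i = k then r j else if i = j then d i else 0) (σ i) i
        = 0 := by
      simp only [Matrix.of_apply, if_neg h2, if_neg h1]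
    rw [Finset.prod_eq_zero (f := fun x => (Matrix.of fun i j =>
      if i = k then r j else if i = j then d i else 0) (σ x) x) (Finset.mem_univ i) hz, smul_zero]
  rw [Matrix.det_apply,
    Finset.sum_eq_single_of_mem (1 : Equiv.Perm (Fin N)) (Finset.mem_univ _) hzero]
  rw [Equiv.Perm.sign_one, one_smul]
  have hdiag : ∀ i, (Matrix.of fun i j => if i = k then r j else if i = j then d i else 0)
      ((1 : Equiv.Perm (Fin N)) i) i = if i = k then r i else d i := by
    intro i
    by_cases h : i = k <;> simp [h]
  rw [Finset.prod_congr rfl fun i _ => hdiag i,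
    ← Finset.mul_prod_erase Finset.univ _ (Finset.mem_univ k), if_pos rfl]
  congr 1
  exact Finset.prod_congr rfl fun i hi => if_neg (Finset.mem_erase.1 hi).1

private lemma entries_ne_zero {n : ℕ} (a : Fin (n+1) → Fin (n+1) → ℂ)
    (L : Fin (2*n+2) → Fin (n+1) → ℂ)
    (hL1 : ∀ (i : Fin (2*n+2)) (h : i.val < n+1), L i = a ⟨i.val, h⟩)
    (hL2 : ∀ (i : Fin (2*n+2)), n+1 ≤ i.val →
      L i = fun j => if j.val = i.val - (n+1) then 1 else 0)
    (hgp : ∀ T : Finset (Fin (2*n+2)), T.card = n+1 →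
      LinearIndependent ℂ fun i : T => L i.val) :
    ∀ i k, a i k ≠ 0 := by
  classical
  intro i k hik
  have hibound : i.val < 2*n+2 := by have := i.isLt; omega
  set i₀ : Fin (2*n+2) := ⟨i.val, hibound⟩ with hi₀
  have hembb : ∀ j : Fin (n+1), n+1+j.val < 2*n+2 := fun j => by have := j.isLt; omega
  set emb : Fin (n+1) → Fin (2*n+2) := fun j => ⟨n+1+j.val, hembb j⟩ with hembdef
  have hembinj : Function.Injective emb := by
    intro x y hxy
    have h := congrArg Fin.val hxy
    simp only [hembdef] at h
    exact Fin.ext (by omega)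
  set S : Finset (Fin (2*n+2)) := (Finset.univ.erase k).image emb with hS
  have hi₀S : i₀ ∉ S := by
    intro hmem
    rw [hS, Finset.mem_image] at hmem
    obtain ⟨j, _, hj⟩ := hmem
    have h := congrArg Fin.val hj
    simp only [hembdef, hi₀] at h
    have := i.isLt
    omega
  have hTcard : (insert i₀ S).card = n+1 := by
    rw [Finset.card_insert_of_notMem hi₀S, hS,
      Finset.card_image_of_injective _ hembinj,
      Finset.card_erase_of_mem (Finset.mem_univ k), Finset.card_univ, Fintype.card_fin]
    omega
  have hli := hgp (insert i₀ S) hTcard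
  rw [Fintype.linearIndependent_iff] at hli
  set gA : Fin (2*n+2) → ℂ := fun t =>
    if t.val < n+1 then 1
    else -(∑ j : Fin (n+1), if t.val = n+1+j.val then a i j else 0) with hgA
  have hg1 : gA i₀ = 1 := by
    rw [hgA]
    exact if_pos i.isLt
  have hL0 : L i₀ = a i := by
    rw [hL1 i₀ i.isLt]
  have hgemb : ∀ j : Fin (n+1), gA (emb j) = -(a i j) := by
    intro j
    rw [hgA]
    simp only [hembdef]
    rw [if_neg (by omega)]
    congr 1
    rw [Finset.sum_eq_single j]
    · rw [if_pos rfl]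
    · intro b _ hb
      rw [if_neg]
      intro hcontra
      exact hb (Fin.ext (by omega))
    · intro habs; exact absurd (Finset.mem_univ _) habs
  have hLemb : ∀ j : Fin (n+1),
      L (emb j) = fun j' : Fin (n+1) => if j' = j then (1:ℂ) else 0 := by
    intro j
    rw [hL2 (emb j) (by simp only [hembdef]; omega)]
    funext j'
    simp only [hembdef]
    by_cases h : j' = j
    · rw [if_pos (by rw [h]; omega), if_pos h]
    · rw [if_neg (fun hc => h (Fin.ext (by omega))), if_neg h]
  have hsum : (∑ t : {x // x ∈ insert i₀ S}, gA t.val • L t.val) = 0 := by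
    rw [Finset.univ_eq_attach, Finset.sum_attach (insert i₀ S) (fun t => gA t • L t),
      Finset.sum_insert hi₀S, hS, Finset.sum_image (fun x _ y _ h => hembinj h),
      hg1, hL0, one_smul,
      Finset.sum_congr rfl (fun j _ => by rw [hgemb j, hLemb j])]
    funext t
    simp only [Pi.add_apply, Finset.sum_apply, Pi.smul_apply, smul_eq_mul, Pi.zero_apply,
      mul_ite, mul_one, mul_zero]
    rw [Finset.sum_ite_eq (Finset.univ.erase k) t (fun j => -(a i j))]
    by_cases htk : t = k
    · rw [if_neg (by simp [htk]), htk, hik, add_zero]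
    · rw [if_pos (Finset.mem_erase.2 ⟨htk, Finset.mem_univ t⟩)]
      ring
  have hzero := hli (fun t => gA t.val) hsum ⟨i₀, Finset.mem_insert_self i₀ S⟩
  rw [hg1] at hzero
  exact one_ne_zero hzero

/-- Fujimoto's proposition: if `g` lies in no hypersurface of degree `≤ n+1`,
`H_{n+2},...,H_{2n+2}` are the coordinate hyperplanes, `{H_j}` are in general position,
and `(f,H_i)/(g,H_i) = c_{i-1} · f_{i-1}/g_{i-1}` (a nowhere-zero holomorphic function)
for `1 ≤ i ≤ n+1`, then all `c_i = 1` and `f = g`. -/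
theorem uniqueness_via_coordinate_hyperplanes (m n : ℕ)
    (F G : (Fin m → ℂ) → Fin (n+1) → ℂ)
    (hF : ∀ i, Differentiable ℂ fun z => F z i) (hG : ∀ i, Differentiable ℂ fun z => G z i)
    (hFred : ∃ z, F z ≠ 0) (hGred : ∃ z, G z ≠ 0)
    (a : Fin (n+1) → Fin (n+1) → ℂ) (L : Fin (2*n+2) → Fin (n+1) → ℂ)
    (hL1 : ∀ (i : Fin (2*n+2)) (h : i.val < n+1), L i = a ⟨i.val, h⟩)
    (hL2 : ∀ (i : Fin (2*n+2)), n+1 ≤ i.val →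
      L i = fun j => if j.val = i.val - (n+1) then 1 else 0)
    (hgp : ∀ T : Finset (Fin (2*n+2)), T.card = n+1 →
      LinearIndependent ℂ fun i : T => L i.val)
    (hnd : ∀ (p : MvPolynomial (Fin (n+1)) ℂ) (d : ℕ), d ≤ n+1 → p.IsHomogeneous d →
      (∀ z, MvPolynomial.eval (G z) p = 0) → p = 0)
    (c : Fin (n+1) → ℂ) (hc : ∀ i, c i ≠ 0)
    (hrel : ∀ i : Fin (n+1), ∃ h : (Fin m → ℂ) → ℂ, Differentiable ℂ h ∧
      (∀ z, h z ≠ 0) ∧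
      (∀ z, ∑ j, a i j * F z j = h z * ∑ j, a i j * G z j) ∧
      (∀ z, h z * G z i = c i * F z i)) :
    (∀ i, c i = 1) ∧ ∀ (z : Fin m → ℂ) (i j : Fin (n+1)), F z i * G z j = F z j * G z i := by
  classical
  choose H Hdiff Hne Hlin Hcoord using hrel
  have ha : ∀ i k, a i k ≠ 0 := entries_ne_zero a L hL1 hL2 hgp
  -- linear forms as polynomials
  set ℓp : Fin (n+1) → MvPolynomial (Fin (n+1)) ℂ := fun i => ∑ j, C (a i j) * X j with hℓp
  have hℓhom : ∀ i, (ℓp i).IsHomogeneous 1 := fun i =>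
    IsHomogeneous.sum _ _ _ fun j _ => isHomogeneous_C_mul_X _ _
  -- determinants of matrices with entries homogeneous of degree 1
  have hdet : ∀ (k : ℕ) (M : Matrix (Fin k) (Fin k) (MvPolynomial (Fin (n+1)) ℂ)),
      (∀ i j, (M i j).IsHomogeneous 1) → M.det.IsHomogeneous k := by
    intro k M hM
    rw [Matrix.det_apply]
    apply IsHomogeneous.sum
    intro σ _
    have hprod : (∏ x, M (σ x) x).IsHomogeneous k := by
      have := IsHomogeneous.prod Finset.univ (fun x => M (σ x) x) (fun _ => 1)
        (fun x _ => hM _ _)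
      simpa using this
    rcases Int.units_eq_one_or (Equiv.Perm.sign σ) with hs | hs <;> rw [hs]
    · simpa using hprod
    · simpa [Units.smul_def] using hprod.neg
  -- STEP 1 : the polynomial matrix
  set Mp : Matrix (Fin (n+1)) (Fin (n+1)) (MvPolynomial (Fin (n+1)) ℂ) :=
    Matrix.of fun i j => C (a i j) * X i - if i = j then C (c i) * ℓp i else 0 with hMp
  have hMphom : ∀ i j, (Mp i j).IsHomogeneous 1 := by
    intro i j
    simp only [hMp, Matrix.of_apply]
    apply (isHomogeneous_C_mul_X (a i j) i).sub
    split_ifs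
    · exact (hℓhom i).C_mul (c i)
    · exact isHomogeneous_zero _ _ _
  set p := Mp.det with hpdef
  have hphom : p.IsHomogeneous (n+1) := hdet (n+1) Mp hMphom
  have hpeval : ∀ x : Fin (n+1) → ℂ,
      eval x p = (Matrix.of fun i j =>
        a i j * x i - if i = j then c i * ∑ t, a i t * x t else 0).det := by
    intro x
    rw [hpdef, RingHom.map_det]
    congr 1
    ext i j
    simp only [hMp, hℓp, RingHom.mapMatrix_apply, Matrix.map_apply, Matrix.of_apply,
      map_sub, map_mul, eval_C, eval_X, apply_ite (eval x), map_zero, map_sum]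
  -- kernel relation : M(G z) *ᵥ F z = 0
  have hMF : ∀ z, Matrix.mulVec (Matrix.of fun i j =>
      a i j * G z i - if i = j then c i * ∑ t, a i t * G z t else 0) (F z) = 0 := by
    intro z
    funext i
    have h1 := Hlin i z
    have h2 := Hcoord i z
    simp only [Matrix.mulVec, dotProduct, Matrix.of_apply, Pi.zero_apply]
    have expand : ∀ j, (a i j * G z i - if i = j then c i * ∑ t, a i t * G z t else 0) * F z j
        = G z i * (a i j * F z j)
          - (if i = j then (c i * ∑ t, a i t * G z t) * F z j else 0) := by
      intro j; split_ifs <;> ring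
    rw [Finset.sum_congr rfl fun j _ => expand j, Finset.sum_sub_distrib, ← Finset.mul_sum,
      h1, Finset.sum_ite_eq, if_pos (Finset.mem_univ i)]
    linear_combination (∑ t, a i t * G z t) * h2
  -- Cramer : det * F = 0
  have hdetF : ∀ z j, eval (G z) p * F z j = 0 := by
    intro z j
    set Mz : Matrix (Fin (n+1)) (Fin (n+1)) ℂ := Matrix.of fun i j =>
      a i j * G z i - if i = j then c i * ∑ t, a i t * G z t else 0 with hMz
    have h0 : Matrix.mulVec Mz (F z) = 0 := hMF z
    have hsmul : Mz.det • F z = 0 := by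
      calc Mz.det • F z
          = Matrix.mulVec (Mz.det • (1 : Matrix (Fin (n+1)) (Fin (n+1)) ℂ)) (F z) := by
            rw [Matrix.smul_mulVec, Matrix.one_mulVec]
        _ = Matrix.mulVec (Mz.adjugate * Mz) (F z) := by rw [Matrix.adjugate_mul]
        _ = Matrix.mulVec Mz.adjugate (Matrix.mulVec Mz (F z)) :=
            (Matrix.mulVec_mulVec _ _ _).symm
        _ = 0 := by rw [h0, Matrix.mulVec_zero]
    have hj := congrFun hsmul j
    rw [hpeval]
    simpa using hj
  -- p = 0
  have hp0 : p = 0 := by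
    apply hnd p (n+1) le_rfl hphom
    intro z
    by_contra hz
    have hFzero : ∀ j w, F w j = 0 := fun j w =>
      entire_zero_of_mul (hF j) (diff_eval hG p)
        (fun w' => by rw [mul_comm]; exact hdetF w' j) hz w
    obtain ⟨w, hw⟩ := hFred
    exact hw (funext fun j => hFzero j w)
  -- all c = 1
  have hc1 : ∀ k, c k = 1 := by
    intro k
    have h0 : eval (fun t => if t = k then (1:ℂ) else 0) p = 0 := by rw [hp0, map_zero]
    rw [hpeval] at h0
    have hmat : (Matrix.of fun i j =>
        a i j * (if i = k then (1:ℂ) else 0)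
          - if i = j then c i * ∑ t, a i t * (if t = k then (1:ℂ) else 0) else 0)
        = Matrix.of (fun i j => if i = k then (a k j - if k = j then c k * a k k else 0)
            else if i = j then -(c i * a i k) else 0) := by
      ext i j
      have hsumt : ∑ t, a i t * (if t = k then (1:ℂ) else 0) = a i k := by
        simp [mul_ite]
      simp only [Matrix.of_apply]
      rw [hsumt]
      by_cases h1 : i = k
      · subst h1
        rw [if_pos rfl, if_pos rfl, mul_one]
      · rw [if_neg h1, if_neg h1, mul_zero, zero_sub]
        by_cases h2 : i = j
        · rw [if_pos h2, if_pos h2]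
        · rw [if_neg h2, if_neg h2, neg_zero]
    rw [hmat, det_row_diag k (fun i => -(c i * a i k))
      (fun j => a k j - if k = j then c k * a k k else 0), if_pos rfl] at h0
    have hprodne : (∏ i ∈ Finset.univ.erase k, -(c i * a i k)) ≠ 0 :=
      Finset.prod_ne_zero_iff.2 fun i _ => neg_ne_zero.2 (mul_ne_zero (hc i) (ha i k))
    have hakk : a k k - c k * a k k = 0 := by
      rcases mul_eq_zero.1 h0 with h | h
      · exact h
      · exact absurd h hprodne
    have h2 : a k k * (1 - c k) = 0 := by linear_combination hakk
    rcases mul_eq_zero.1 h2 with h | h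
    · exact absurd h (ha k k)
    · exact (eq_of_sub_eq_zero h).symm
  refine ⟨hc1, ?_⟩
  -- STEP 2 : all the H i are equal, hence F ∝ G
  -- key algebraic fact with c = 1
  have hNH : ∀ z (i : Fin (n+1)), ∑ j, (a i j * G z j) * H j z
      = (∑ u, a i u * G z u) * H i z := by
    intro z i
    have h1 := Hlin i z
    have hco : ∀ j, (a i j * G z j) * H j z = a i j * F z j := by
      intro j
      have h2 := Hcoord j z
      rw [hc1 j, one_mul] at h2
      linear_combination a i j * h2
    rw [Finset.sum_congr rfl fun j _ => hco j, h1]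
    ring
  -- the minor polynomial
  set qM : Matrix (Fin n) (Fin n) (MvPolynomial (Fin (n+1)) ℂ) :=
    Matrix.of fun i j => C (a i.succ j.succ) * X j.succ - if i = j then ℓp i.succ else 0
    with hqM
  have hqhom : qM.det.IsHomogeneous n := by
    apply hdet n qM
    intro i j
    simp only [hqM, Matrix.of_apply]
    apply (isHomogeneous_C_mul_X _ _).sub
    split_ifs
    · exact hℓhom _
    · exact isHomogeneous_zero _ _ _
  set q := qM.det with hqdef
  have hqeval : ∀ x : Fin (n+1) → ℂ,
      eval x q = (Matrix.of fun i j =>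
        a i.succ j.succ * x j.succ - if i = j then ∑ t, a i.succ t * x t else 0
          : Matrix (Fin n) (Fin n) ℂ).det := by
    intro x
    rw [hqdef, RingHom.map_det]
    congr 1
    ext i j
    simp only [hqM, hℓp, RingHom.mapMatrix_apply, Matrix.map_apply, Matrix.of_apply,
      map_sub, map_mul, eval_C, eval_X, apply_ite (eval x), map_zero, map_sum]
  -- q is a nonzero polynomial
  have hq0 : q ≠ 0 := by
    intro h
    have he := hqeval (fun t => if t = 0 then (1:ℂ) else 0)
    rw [h, map_zero] at he
    have hmat : (Matrix.of fun i j =>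
        a i.succ j.succ * (if (j.succ : Fin (n+1)) = 0 then (1:ℂ) else 0)
          - if i = j then ∑ t, a i.succ t * (if t = 0 then (1:ℂ) else 0) else 0
          : Matrix (Fin n) (Fin n) ℂ)
        = Matrix.diagonal (fun i : Fin n => -(a i.succ 0)) := by
      ext i j
      have hsumt : ∑ t, a i.succ t * (if t = 0 then (1:ℂ) else 0) = a i.succ 0 := by
        simp [mul_ite]
      simp only [Matrix.of_apply, Matrix.diagonal]
      rw [hsumt, if_neg (Fin.succ_ne_zero j), mul_zero, zero_sub]
      by_cases h2 : i = j
      · rw [if_pos h2, if_pos h2]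
      · rw [if_neg h2, if_neg h2, neg_zero]
    rw [hmat, Matrix.det_diagonal] at he
    have hne : (∏ i : Fin n, -(a i.succ 0)) ≠ 0 :=
      Finset.prod_ne_zero_iff.2 fun i _ => neg_ne_zero.2 (ha _ _)
    exact hne he.symm
  -- a point where the minor does not vanish
  have hz₁ : ∃ z₁, eval (G z₁) q ≠ 0 := by
    by_contra hcon
    push_neg at hcon
    exact hq0 (hnd q n (by omega) hqhom hcon)
  obtain ⟨z₁, hz₁⟩ := hz₁
  -- pointwise : (H j z - H 0 z) * (minor at z) = 0
  have hkey : ∀ (j : Fin (n+1)) z, (H j z - H 0 z) * eval (G z) q = 0 := by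
    intro j z
    by_cases hδ : eval (G z) q = 0
    · rw [hδ, mul_zero]
    · set Nz : Matrix (Fin n) (Fin n) ℂ := Matrix.of fun i t =>
        a i.succ t.succ * G z t.succ - if i = t then ∑ u, a i.succ u * G z u else 0 with hNz
      have hdetNz : Nz.det = eval (G z) q := (hqeval (G z)).symm
      set w : Fin n → ℂ := fun t => H t.succ z - H 0 z with hw
      have hNw : Matrix.mulVec Nz w = 0 := by
        funext i
        simp only [Matrix.mulVec, dotProduct, Matrix.of_apply, Pi.zero_apply, hNz, hw]
        have expand : ∀ t : Fin n,
            (a i.succ t.succ * G z t.succ - if i = t then ∑ u, a i.succ u * G z u else 0)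
              * (H t.succ z - H 0 z)
            = ((a i.succ t.succ * G z t.succ) * H t.succ z
                - (a i.succ t.succ * G z t.succ) * H 0 z)
              - (if i = t then (∑ u, a i.succ u * G z u) * (H t.succ z - H 0 z) else 0) := by
          intro t; split_ifs <;> ring
        rw [Finset.sum_congr rfl fun t _ => expand t, Finset.sum_sub_distrib,
          Finset.sum_sub_distrib, Finset.sum_ite_eq, if_pos (Finset.mem_univ i),
          ← Finset.sum_mul]
        have hr1 := hNH z i.succ
        rw [Fin.sum_univ_succ] at hr1
        have hr2 : (∑ u, a i.succ u * G z u)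
            = a i.succ 0 * G z 0 + ∑ t : Fin n, a i.succ t.succ * G z t.succ :=
          Fin.sum_univ_succ _
        linear_combination hr1 + H 0 z * hr2
      have hdetU : IsUnit Nz.det := isUnit_iff_ne_zero.2 (by rw [hdetNz]; exact hδ)
      have hw0 : w = 0 := by
        have hinv : Nz⁻¹ * Nz = 1 := Matrix.nonsing_inv_mul Nz hdetU
        calc w = Matrix.mulVec (1 : Matrix (Fin n) (Fin n) ℂ) w := (Matrix.one_mulVec w).symm
          _ = Matrix.mulVec (Nz⁻¹ * Nz) w := by rw [hinv]
          _ = Matrix.mulVec Nz⁻¹ (Matrix.mulVec Nz w) := (Matrix.mulVec_mulVec _ _ _).symm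
          _ = 0 := by rw [hNw, Matrix.mulVec_zero]
      rcases Fin.eq_zero_or_eq_succ j with hj | ⟨t, ht⟩
      · rw [hj, sub_self, zero_mul]
      · have hwt := congrFun hw0 t
        simp only [hw, Pi.zero_apply] at hwt
        rw [ht, hwt, zero_mul]
  -- globalize
  have hH0 : ∀ (j : Fin (n+1)) w, H j w - H 0 w = 0 := fun j =>
    entire_zero_of_mul ((Hdiff j).sub (Hdiff 0)) (diff_eval hG q) (hkey j) hz₁
  intro z i j
  have fi := Hcoord i z
  rw [hc1 i, one_mul] at fi
  have fj := Hcoord j z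
  rw [hc1 j, one_mul] at fj
  have e1 := hH0 i z
  have e2 := hH0 j z
  linear_combination (-(G z j)) * fi + (G z i) * fj
    + (G z i * G z j) * e1 - (G z i * G z j) * e2
end

section
/- Let f and g be meromorphic maps of C^m into P^n with reduced representations (f_0,...,f_n) and (g_0,...,g_n), and let {H_j}_{j=1}^{2n+2} be hyperplanes in general position in P^n, with defining linear forms L_j, such that h_j := L_j(f_0,...,f_n)/L_j(g_0,...,g_n) is a nowhere-zero holomorphic function on C^m for each j. If g is linearly non-degenerate (its image lies in no hyperplane) and there exist n+2 distinct indices i_1,...,i_{n+2} with [h_{i_1}] = [h_{i_2}] = ... = [h_{i_{n+2}}] in H*/C* (i.e., the quotients h_{i_a}/h_{i_b} are all constants), then f = g as meromorphic maps. -/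
private lemma sum_swap_aux {m n N : ℕ} (L : Fin N → Fin (n+1) → ℂ)
    (T : Finset (Fin N)) (a : Fin N → ℂ) (G : (Fin m → ℂ) → Fin (n+1) → ℂ) (z : Fin m → ℂ) :
    ∑ j ∈ T, a j * ∑ i, L j i * G z i = ∑ i, (∑ j ∈ T, a j * L j i) * G z i := by
  simp only [Finset.mul_sum, Finset.sum_mul]
  rw [Finset.sum_comm]
  exact Finset.sum_congr rfl fun i _ => Finset.sum_congr rfl fun j _ => by ring

private lemma keyA {n N : ℕ} (L : Fin N → Fin (n+1) → ℂ) (S : Finset (Fin N))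
    (hli : LinearIndependent ℂ fun i : S => L i.val)
    (a : Fin N → ℂ) (hsum : ∑ j ∈ S, a j • L j = 0) : ∀ j ∈ S, a j = 0 := by
  have h := Fintype.linearIndependent_iff.mp hli (fun j => a j) ?_
  · intro j hj; exact h ⟨j, hj⟩
  · rw [← hsum]
    exact Finset.sum_coe_sort S (fun j => a j • L j)

private lemma keyB {n N : ℕ} (L : Fin N → Fin (n+1) → ℂ)
    (hgp : ∀ S : Finset (Fin N), S.card = n+1 → LinearIndependent ℂ fun i : S => L i.val)
    (T : Finset (Fin N)) (hT : T.card = n+2)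
    (a : Fin N → ℂ) (hsum : ∑ j ∈ T, a j • L j = 0)
    (j₀ : Fin N) (hj₀ : j₀ ∈ T) (ha0 : a j₀ = 0) : ∀ j ∈ T, a j = 0 := by
  have hS : (T.erase j₀).card = n+1 := by rw [Finset.card_erase_of_mem hj₀, hT]; omega
  have hsum' : ∑ j ∈ T.erase j₀, a j • L j = 0 := by
    rw [← Finset.add_sum_erase T _ hj₀, ha0, zero_smul, zero_add] at hsum
    exact hsum
  have hz := keyA L _ (hgp _ hS) a hsum'
  intro j hj
  rcases eq_or_ne j j₀ with rfl | hne
  · exact ha0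
  · exact hz j (Finset.mem_erase.mpr ⟨hne, hj⟩)

/-- Fujimoto's uniqueness proposition: if `f, g : ℂ^m → ℙ^n` have reduced
representations `F, G`, the hyperplanes `H₁,...,H_{2n+2}` (with defining linear forms
`L j`) are in general position, each `h j = (f,H_j)/(g,H_j)` is a nowhere-zero
holomorphic function, `g` is linearly non-degenerate, and `n+2` of the classes `[h j]`
in `H*/ℂ*` coincide, then `f = g`. -/
theorem uniqueness_of_n_plus_two_classes (m n : ℕ)
    (F G : (Fin m → ℂ) → Fin (n+1) → ℂ)
    (hF : ∀ i, Differentiable ℂ fun z => F z i) (hG : ∀ i, Differentiable ℂ fun z => G z i)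
    (hFred : ∃ z, F z ≠ 0) (hGred : ∃ z, G z ≠ 0)
    (L : Fin (2*n+2) → Fin (n+1) → ℂ)
    (hgp : ∀ T : Finset (Fin (2*n+2)), T.card = n+1 →
      LinearIndependent ℂ fun i : T => L i.val)
    (h : Fin (2*n+2) → (Fin m → ℂ) → ℂ)
    (hhol : ∀ j, Differentiable ℂ (h j)) (hne : ∀ j z, h j z ≠ 0)
    (hrel : ∀ j z, ∑ i, L j i * F z i = h j z * ∑ i, L j i * G z i)
    (hlnd : ∀ c : Fin (n+1) → ℂ, (∀ z, ∑ i, c i * G z i = 0) → c = 0)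
    (T : Finset (Fin (2*n+2))) (hT : T.card = n+2)
    (hTeq : ∀ j₁ ∈ T, ∀ j₂ ∈ T, ∃ k : ℂ, ∀ z, h j₁ z = k * h j₂ z) :
    ∀ (z : Fin m → ℂ) (i j : Fin (n+1)), F z i * G z j = F z j * G z i := by
  classical
  -- Step 1: a nontrivial linear relation among the n+2 forms L j, j ∈ T
  have hcardT : Fintype.card T = n+2 := by simp [hT]
  have hnotli : ¬ LinearIndependent ℂ (fun j : T => L j.val) := by
    intro hli
    have h1 := hli.fintype_card_le_finrank
    rw [hcardT, Module.finrank_fin_fun] at h1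
    omega
  obtain ⟨d, hd0, j₁, hj₁⟩ := Fintype.not_linearIndependent_iff.mp hnotli
  set c : Fin (2*n+2) → ℂ := fun j => if hj : j ∈ T then d ⟨j, hj⟩ else 0 with hc
  have hcsum : ∑ j ∈ T, c j • L j = 0 := by
    rw [← Finset.sum_coe_sort T (fun j => c j • L j), ← hd0]
    exact Finset.sum_congr rfl fun j _ => by simp [hc, j.2]
  have hcne : ∀ j ∈ T, c j ≠ 0 := by
    intro j hj hcj
    have hall := keyB L hgp T hT c hcsum j hj hcj
    apply hj₁
    have := hall j₁ j₁.2
    simpa [hc, j₁.2] using this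
  obtain ⟨j₀, hj₀⟩ : T.Nonempty := Finset.card_pos.mp (by rw [hT]; omega)
  set z₀ : Fin m → ℂ := fun _ => 0 with hz₀
  set K : Fin (2*n+2) → ℂ := fun j => h j z₀ / h j₀ z₀ with hKdef
  have hK : ∀ j ∈ T, ∀ z, h j z = K j * h j₀ z := by
    intro j hj z
    obtain ⟨k, hk⟩ := hTeq j hj j₀ hj₀
    have hKk : K j = k := by
      rw [show K j = h j z₀ / h j₀ z₀ from rfl, hk z₀]
      field_simp [hne j₀ z₀]
    rw [hKk]; exact hk z
  have hKj₀ : K j₀ = 1 := by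
    rw [show K j₀ = h j₀ z₀ / h j₀ z₀ from rfl]
    exact div_self (hne j₀ z₀)
  -- Step 3 tool: nondegeneracy of g
  have hGrel : ∀ a : Fin (2*n+2) → ℂ, (∀ z, ∑ j ∈ T, a j * ∑ i, L j i * G z i = 0) →
      ∑ j ∈ T, a j • L j = 0 := by
    intro a ha
    have h1 : ∀ z, ∑ i, (∑ j ∈ T, a j * L j i) * G z i = 0 := fun z => by
      rw [← sum_swap_aux]; exact ha z
    have h2 := hlnd (fun i => ∑ j ∈ T, a j * L j i) h1
    funext i
    simpa [Finset.sum_apply] using congrFun h2 i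
  -- relation for c·K against G
  have hcK : ∀ z, ∑ j ∈ T, (c j * K j) * ∑ i, L j i * G z i = 0 := by
    intro z
    have hcoef : ∀ i, (∑ j ∈ T, c j * L j i) = 0 := fun i => by
      simpa [Finset.sum_apply] using congrFun hcsum i
    have hF0 : ∑ j ∈ T, c j * ∑ i, L j i * F z i = 0 := by
      rw [sum_swap_aux]
      simp [hcoef]
    have h3 : ∑ j ∈ T, c j * (K j * h j₀ z * ∑ i, L j i * G z i) = 0 := by
      rw [← hF0]
      refine Finset.sum_congr rfl fun j hj => ?_
      rw [hrel j z, hK j hj z]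
    have h4 : h j₀ z * ∑ j ∈ T, (c j * K j) * ∑ i, L j i * G z i = 0 := by
      rw [Finset.mul_sum, ← h3]
      exact Finset.sum_congr rfl fun j hj => by ring
    exact (mul_eq_zero.mp h4).resolve_left (hne j₀ z)
  have hrel2 : ∑ j ∈ T, (c j * K j) • L j = 0 := hGrel _ hcK
  -- Step 4: all K j = 1 on T
  have hK1 : ∀ j ∈ T, K j = 1 := by
    intro j hj
    have hb : ∑ jj ∈ T, ((fun jj => c jj * K jj - c jj) jj • L jj) = 0 := by
      simp only [sub_smul, Finset.sum_sub_distrib, hrel2, hcsum, sub_zero]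
    have hbj₀ : (fun jj => c jj * K jj - c jj) j₀ = 0 := by
      show c j₀ * K j₀ - c j₀ = 0
      rw [hKj₀]; ring
    have h5 := keyB L hgp T hT _ hb j₀ hj₀ hbj₀ j hj
    have h6 : c j * K j = c j * 1 := by rw [mul_one]; exact sub_eq_zero.mp h5
    exact mul_left_cancel₀ (hcne j hj) h6
  -- Final step: F z = h j₀ z • G z pointwise
  intro z i j
  set v : Fin (n+1) → ℂ := fun i => F z i - h j₀ z * G z i with hvdef
  have hvanish : ∀ jj ∈ T.erase j₀, ∑ i, L jj i * v i = 0 := by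
    intro jj hjj
    have hjjT := (Finset.mem_erase.mp hjj).2
    have hsplit : ∑ i, L jj i * v i
        = ∑ i, L jj i * F z i - h j₀ z * ∑ i, L jj i * G z i := by
      simp only [hvdef, mul_sub, Finset.sum_sub_distrib, Finset.mul_sum]
      congr 1
      exact Finset.sum_congr rfl fun i _ => by ring
    rw [hsplit, hrel jj z, hK jj hjjT z, hK1 jj hjjT]; ring
  have hScard : (T.erase j₀).card = n+1 := by
    rw [Finset.card_erase_of_mem hj₀, hT]; omega
  have hli := hgp _ hScard
  have hcardS : Fintype.card (T.erase j₀) = n+1 := by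
    rw [Fintype.card_coe]; exact hScard
  have hSne : (T.erase j₀).Nonempty := Finset.card_pos.mp (by rw [hScard]; omega)
  haveI : Nonempty { x // x ∈ T.erase j₀ } := ⟨⟨hSne.choose, hSne.choose_spec⟩⟩
  let b : Module.Basis (T.erase j₀) ℂ (Fin (n+1) → ℂ) :=
    basisOfLinearIndependentOfCardEqFinrank hli (by rw [hcardS, Module.finrank_fin_fun])
  have hbcoe : ∀ jj : (T.erase j₀), b jj = L jj.val := fun jj => by
    simp [b, coe_basisOfLinearIndependentOfCardEqFinrank]
  have hv0 : ∀ ii, v ii = 0 := by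
    intro ii
    have hw := b.sum_repr (Pi.single ii 1)
    have hstep : v ii = ∑ i, (Pi.single ii 1 : Fin (n+1) → ℂ) i * v i := by
      simp [Pi.single_apply]
    rw [hstep, ← hw]
    have : ∀ i, (∑ jj : (T.erase j₀), b.repr (Pi.single ii 1) jj • b jj) i
        = ∑ jj : (T.erase j₀), b.repr (Pi.single ii 1) jj * b jj i := by
      intro i; simp [Finset.sum_apply]
    simp only [this, Finset.sum_mul]
    rw [Finset.sum_comm]
    refine Finset.sum_eq_zero fun jj _ => ?_
    have h7 : ∑ i, b.repr (Pi.single ii 1) jj * b jj i * v i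
        = b.repr (Pi.single ii 1) jj * ∑ i, L jj.val i * v i := by
      rw [Finset.mul_sum]
      exact Finset.sum_congr rfl fun i _ => by rw [hbcoe jj]; ring
    rw [h7, hvanish jj.val jj.2, mul_zero]
  have hFi : ∀ ii, F z ii = h j₀ z * G z ii := fun ii => by
    have := hv0 ii
    simp only [hvdef] at this
    linear_combination this
  rw [hFi i, hFi j]; ring
end
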